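/- Define H_n(Λ) := −∑_{j=1}^n log((AᵀΛ)_j) + ⟨Λ, b⟩ for Λ ∈ ℝ^m with (AᵀΛ)_j > 0 for all j, and H_n(Λ) := +∞ otherwise. Then H_n is convex and attains its minimum at a unique point Λ₀ ∈ ℝ^m, and the unique positive vector w in the row span of A with A(1/w) = b is given by w = AᵀΛ₀. -/

import Mathlib

/-- **Dual variational characterization of the barycenter weights.**
Define `H_n(Λ) = -∑ j, log((AᵀΛ)_j) + ⟨Λ, b⟩` on the (convex) domain
`D = {Λ : (AᵀΛ)_j > 0 for all j}` (outside `D` the function is interpreted as `+∞`).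
Then `H_n` is convex on `D`, attains its minimum over `D` at a unique point `Λ₀`, and the
unique positive vector `w` in the row span of `A` with `A (1/w) = b` is `w = AᵀΛ₀`. -/
theorem barycenter_weights_eq_argmin_dual_entropy
    (m n : ℕ) (hm : 0 < m) (hmn : m < n)
    (A : Matrix (Fin m) (Fin n) ℝ) (hApos : ∀ i j, 0 < A i j)
    (hArank : A.rank = m)
    (b : Fin m → ℝ) (hbpos : ∀ i, 0 < b i)
    (hint : ∃ x : Fin n → ℝ, (∀ j, 0 < x j) ∧ A.mulVec x = b)
    (w : Fin n → ℝ) (hwpos : ∀ j, 0 < w j)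
    (hwspan : ∃ u : Fin m → ℝ, w = A.transpose.mulVec u)
    (hwb : A.mulVec (fun j => (w j)⁻¹) = b)
    (D : Set (Fin m → ℝ)) (hD : D = {Λ : Fin m → ℝ | ∀ j, 0 < A.transpose.mulVec Λ j})
    (H : (Fin m → ℝ) → ℝ)
    (hH : ∀ Λ, H Λ = -∑ j, Real.log (A.transpose.mulVec Λ j) + ∑ i, Λ i * b i) :
    ConvexOn ℝ D H ∧
    ∃ Λ₀ ∈ D, (∀ Λ ∈ D, H Λ₀ ≤ H Λ) ∧
      (∀ Λ' ∈ D, (∀ Λ ∈ D, H Λ' ≤ H Λ) → Λ' = Λ₀) ∧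
      w = A.transpose.mulVec Λ₀ := by
  obtain ⟨u, hu⟩ := hwspan
  -- D is convex
  have hDconv : Convex ℝ D := by
    rw [hD]
    intro x hx y hy a c ha hc hac
    intro j
    have hxy : A.transpose.mulVec (a • x + c • y) j
        = a * A.transpose.mulVec x j + c * A.transpose.mulVec y j := by
      simp [Matrix.mulVec_add, Matrix.mulVec_smul, smul_eq_mul]
    rw [hxy]
    rcases ha.lt_or_eq with ha' | ha'
    · exact add_pos_of_pos_of_nonneg (mul_pos ha' (hx j)) (mul_nonneg hc (hy j).le)
    · have hc1 : c = 1 := by linarith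
      simp [← ha', hc1]
      exact hy j
  -- ⟨Λ, b⟩ = ∑_j (AᵀΛ)_j / w_j
  have hsum : ∀ Λ : Fin m → ℝ,
      ∑ i, Λ i * b i = ∑ j, A.transpose.mulVec Λ j * (w j)⁻¹ := by
    intro Λ
    have hb : ∀ i, b i = ∑ j, A i j * (w j)⁻¹ := by
      intro i; rw [← hwb]; rfl
    calc ∑ i, Λ i * b i = ∑ i, ∑ j, Λ i * (A i j * (w j)⁻¹) := by
          refine Finset.sum_congr rfl fun i _ => ?_
          rw [hb i, Finset.mul_sum]
      _ = ∑ j, ∑ i, Λ i * (A i j * (w j)⁻¹) := Finset.sum_comm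
      _ = ∑ j, A.transpose.mulVec Λ j * (w j)⁻¹ := by
          refine Finset.sum_congr rfl fun j _ => ?_
          simp only [Matrix.mulVec, Matrix.transpose_apply, dotProduct, Finset.sum_mul]
          exact Finset.sum_congr rfl fun i _ => by ring
  -- rewrite H as a sum over j
  have hH' : ∀ Λ : Fin m → ℝ,
      H Λ = ∑ j, (A.transpose.mulVec Λ j * (w j)⁻¹ - Real.log (A.transpose.mulVec Λ j)) := by
    intro Λ
    rw [hH Λ, hsum Λ, Finset.sum_sub_distrib]
    ring
  have huw : ∀ j, A.transpose.mulVec u j = w j := fun j => (congrFun hu j).symm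
  have huD : u ∈ D := by
    rw [hD]; intro j; rw [huw j]; exact hwpos j
  have hHu : H u = ∑ j, (1 - Real.log (w j)) := by
    rw [hH' u]
    refine Finset.sum_congr rfl fun j _ => ?_
    rw [huw j, mul_inv_cancel₀ (hwpos j).ne']
  -- pointwise inequality from log t ≤ t - 1
  have key : ∀ x y : ℝ, 0 < x → 0 < y →
      1 - Real.log y ≤ x * y⁻¹ - Real.log x := by
    intro x y hx hy
    have h := Real.log_le_sub_one_of_pos (div_pos hx hy)
    rw [Real.log_div hx.ne' hy.ne', div_eq_mul_inv] at h
    linarith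
  have keylt : ∀ x y : ℝ, 0 < x → 0 < y → x ≠ y →
      1 - Real.log y < x * y⁻¹ - Real.log x := by
    intro x y hx hy hxy
    have hne : x / y ≠ 1 := by
      intro h
      exact hxy ((div_eq_one_iff_eq hy.ne').mp h)
    have h := Real.log_lt_sub_one_of_pos (div_pos hx hy) hne
    rw [Real.log_div hx.ne' hy.ne', div_eq_mul_inv] at h
    linarith
  have hmemD : ∀ Λ ∈ D, ∀ j, 0 < A.transpose.mulVec Λ j := by
    intro Λ hΛ; rw [hD] at hΛ; exact hΛ
  -- u is a minimizer
  have hmin : ∀ Λ ∈ D, H u ≤ H Λ := by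
    intro Λ hΛ
    rw [hHu, hH' Λ]
    exact Finset.sum_le_sum fun j _ => key _ _ (hmemD Λ hΛ j) (hwpos j)
  -- injectivity of Aᵀ ·
  have hinj : Function.Injective (Matrix.mulVecLin A.transpose) := by
    rw [← LinearMap.ker_eq_bot]
    have hfr : Module.finrank ℝ (LinearMap.range (Matrix.mulVecLin A.transpose)) = m := by
      have : A.transpose.rank = m := by rw [Matrix.rank_transpose]; exact hArank
      exact this
    have hdim := LinearMap.finrank_range_add_finrank_ker (Matrix.mulVecLin A.transpose)
    rw [hfr, Module.finrank_fin_fun] at hdim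
    have hker : Module.finrank ℝ (LinearMap.ker (Matrix.mulVecLin A.transpose)) = 0 := by
      omega
    exact Submodule.finrank_eq_zero.mp hker
  -- convexity of H on D
  have hconv : ConvexOn ℝ D H := by
    have h1 : ∀ j : Fin n, ConvexOn ℝ D (fun Λ => -Real.log (A.transpose.mulVec Λ j)) := by
      intro j
      have hlog : ConvexOn ℝ (Set.Ioi (0:ℝ)) (-Real.log) :=
        strictConcaveOn_log_Ioi.concaveOn.neg
      have hcomp := hlog.comp_affineMap
        ((LinearMap.proj j ∘ₗ Matrix.mulVecLin A.transpose).toAffineMap)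
      refine (hcomp.subset ?_ hDconv)
      intro Λ hΛ
      exact hmemD Λ hΛ j
    have hsumconv : ∀ s : Finset (Fin n),
        ConvexOn ℝ D (fun Λ => ∑ j ∈ s, -Real.log (A.transpose.mulVec Λ j)) := by
      intro s
      induction s using Finset.induction with
      | empty => simpa using convexOn_const (0:ℝ) hDconv
      | @insert a s hns ih =>
        simp only [Finset.sum_insert hns]
        exact (h1 _).add ih
    have hlin : ConvexOn ℝ D (fun Λ => ∑ i, Λ i * b i) := by
      refine ⟨hDconv, fun x _ y _ a c ha hc hac => le_of_eq ?_⟩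
      simp only [Pi.add_apply, Pi.smul_apply, smul_eq_mul, Finset.mul_sum,
        ← Finset.sum_add_distrib]
      exact Finset.sum_congr rfl fun i _ => by ring
    have := hsumconv Finset.univ |>.add hlin
    convert this using 1
    · rfl
    funext Λ
    rw [hH Λ, ← Finset.sum_neg_distrib]
    rfl
  refine ⟨hconv, u, huD, hmin, ?_, hu⟩
  -- uniqueness
  intro Λ' hΛ' hminΛ'
  have heq : H Λ' = H u := le_antisymm (hminΛ' u huD) (hmin Λ' hΛ')
  have hall : ∀ j, A.transpose.mulVec Λ' j = w j := by
    by_contra hc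
    push_neg at hc
    obtain ⟨j0, hj0⟩ := hc
    have hlt : ∑ j, (1 - Real.log (w j)) <
        ∑ j, (A.transpose.mulVec Λ' j * (w j)⁻¹ - Real.log (A.transpose.mulVec Λ' j)) := by
      refine Finset.sum_lt_sum (fun j _ => key _ _ (hmemD Λ' hΛ' j) (hwpos j))
        ⟨j0, Finset.mem_univ j0, keylt _ _ (hmemD Λ' hΛ' j0) (hwpos j0) hj0⟩
    rw [← hHu, ← hH' Λ'] at hlt
    linarith [heq.le, heq.ge, hlt]
  apply hinj
  have : A.transpose.mulVec Λ' = A.transpose.mulVec u := by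
    funext j; rw [hall j, huw j]
  simpa [Matrix.mulVecLin_apply, Matrix.mulVec_transpose] using this
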